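/- Let 0 < t < 1, p₁ > 0 and α₁ < β₁ be real numbers with β₁ − α₁ = 4·√(p₁·t·(1−t)). Set Δ = α₁² − α₁·β₁ + β₁², β = (α₁ + β₁ + 2·√Δ)/3 and δ₁ = (α₁ + β₁ − √Δ)/3. Then ∫₀^β (x − δ₁)/(2π·t·(1−t)) · √((β − x)/x) dx = p₁; that is, the signed measure μ₁ on [0, β] with density dμ₁/dx = ((x − δ₁)/(2π·t·(1−t)))·√((β − x)/x) has total mass p₁. -/

import Mathlib

open Real MeasureTheory intervalIntegral Set

set_option maxHeartbeats 1000000 in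
/-- The signed measure `μ₁` on `[0, β]` with density
`((x − δ₁)/(2π t(1−t)))·√((β − x)/x)` has total mass `p₁`. -/
theorem mu1_total_mass (t p₁ α₁ β₁ : ℝ) (ht0 : 0 < t) (ht1 : t < 1)
    (hp₁ : 0 < p₁) (hαβ : α₁ < β₁)
    (hsep : β₁ - α₁ = 4 * Real.sqrt (p₁ * t * (1 - t)))
    (Δ β δ₁ : ℝ)
    (hΔ : Δ = α₁ ^ 2 - α₁ * β₁ + β₁ ^ 2)
    (hβ : β = (α₁ + β₁ + 2 * Real.sqrt Δ) / 3)
    (hδ₁ : δ₁ = (α₁ + β₁ - Real.sqrt Δ) / 3) :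
    ∫ x in (0:ℝ)..β,
        (x - δ₁) / (2 * Real.pi * t * (1 - t)) * Real.sqrt ((β - x) / x) = p₁ := by
  have ht1' : 0 < 1 - t := by linarith
  have hΔ0 : 0 ≤ Δ := by nlinarith [sq_nonneg (α₁ - β₁), sq_nonneg α₁, sq_nonneg β₁]
  set r : ℝ := Real.sqrt Δ with hrdef
  have hr0 : 0 ≤ r := Real.sqrt_nonneg _
  have hr2 : r ^ 2 = α₁ ^ 2 - α₁ * β₁ + β₁ ^ 2 := by rw [hrdef, Real.sq_sqrt hΔ0, hΔ]
  have hβpos : 0 < β := by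
    have h4 : (α₁ + β₁) ^ 2 < (2 * r) ^ 2 := by nlinarith [sq_nonneg (β₁ - α₁)]
    have habs : |α₁ + β₁| < 2 * r :=
      lt_of_pow_lt_pow_left₀ 2 (by positivity) (by rwa [sq_abs])
    have := neg_abs_le (α₁ + β₁)
    rw [hβ]; linarith
  have hβne : β ≠ 0 := hβpos.ne'
  set c : ℝ := 2 * Real.pi * t * (1 - t) with hc
  have hcpos : 0 < c := by rw [hc]; positivity
  set K : ℝ := β ^ 2 / 8 - δ₁ * β / 2 with hK
  set H : ℝ → ℝ := fun x =>
    ((x - β / 2) / 2 - δ₁) * Real.sqrt (x * (β - x)) + K * Real.arcsin ((2 * x - β) / β) with hH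
  -- Integrability
  have hmeas : AEStronglyMeasurable
      (fun x => (x - δ₁) / c * Real.sqrt ((β - x) / x)) (volume.restrict (Set.uIoc (0:ℝ) β)) := by
    apply Measurable.aestronglyMeasurable
    exact ((measurable_id.sub_const δ₁).div_const c).mul
      (Real.continuous_sqrt.measurable.comp
        ((measurable_const.sub measurable_id).div measurable_id))
  set C : ℝ := (|δ₁| + β) / c * Real.sqrt β with hC
  have hint : IntervalIntegrable
      (fun x => (x - δ₁) / c * Real.sqrt ((β - x) / x)) volume 0 β := by
    have hg : IntervalIntegrable (fun x : ℝ => C * x ^ (-(1/2) : ℝ)) volume 0 β :=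
      (intervalIntegral.intervalIntegrable_rpow' (by norm_num)).const_mul C
    refine hg.mono_fun hmeas ?_
    filter_upwards [ae_restrict_mem measurableSet_uIoc] with x hx
    rw [Set.uIoc_of_le hβpos.le] at hx
    obtain ⟨hx0, hxβ⟩ := hx
    have hxr : 0 < x ^ (-(1/2) : ℝ) := Real.rpow_pos_of_pos hx0 _
    have hCnn : 0 ≤ C := by rw [hC]; positivity
    have hsle : Real.sqrt ((β - x) / x) ≤ Real.sqrt β * x ^ (-(1/2) : ℝ) := by
      have h1 : (β - x) / x ≤ β / x := by gcongr; linarith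
      have h2 : Real.sqrt (β / x) = Real.sqrt β * x ^ (-(1/2) : ℝ) := by
        rw [Real.sqrt_div hβpos.le, div_eq_mul_inv, Real.sqrt_eq_rpow x,
          ← Real.rpow_neg hx0.le]
      calc Real.sqrt ((β - x) / x) ≤ Real.sqrt (β / x) := Real.sqrt_le_sqrt h1
        _ = Real.sqrt β * x ^ (-(1/2) : ℝ) := h2
    have habs : |x - δ₁| ≤ |δ₁| + β := by
      rw [abs_le]; constructor
      · have := le_abs_self δ₁; linarith
      · have := neg_abs_le δ₁; linarith
    simp only [Real.norm_eq_abs]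
    rw [abs_of_nonneg (by positivity : (0:ℝ) ≤ C * x ^ (-(1/2) : ℝ))]
    rw [abs_mul, abs_div, abs_of_pos hcpos, abs_of_nonneg (Real.sqrt_nonneg _)]
    calc |x - δ₁| / c * Real.sqrt ((β - x) / x)
        ≤ (|δ₁| + β) / c * (Real.sqrt β * x ^ (-(1/2) : ℝ)) := by
          apply mul_le_mul (by gcongr) hsle (Real.sqrt_nonneg _) (by positivity)
      _ = C * x ^ (-(1/2) : ℝ) := by rw [hC]; ring
  -- Continuity of the antiderivative
  have hcont : ContinuousOn (fun y => H y / c) (Icc (0:ℝ) β) := by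
    apply Continuous.continuousOn
    apply Continuous.div_const
    rw [hH]
    exact (((continuous_id.sub continuous_const).div_const 2).sub continuous_const).mul
        (Real.continuous_sqrt.comp (continuous_id.mul (continuous_const.sub continuous_id)))
      |>.add (continuous_const.mul (Real.continuous_arcsin.comp
        (((continuous_const.mul continuous_id).sub continuous_const).div_const β)))
  -- Derivative on the open interval
  have hderiv : ∀ x ∈ Ioo (0:ℝ) β,
      HasDerivWithinAt (fun y => H y / c)
        ((x - δ₁) / c * Real.sqrt ((β - x) / x)) (Ioi x) x := by
    intro x hx
    obtain ⟨hx0, hxβ⟩ := hx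
    have hβx : 0 < β - x := by linarith
    have hprod : 0 < x * (β - x) := mul_pos hx0 hβx
    set s : ℝ := Real.sqrt (x * (β - x)) with hs
    have hspos : 0 < s := Real.sqrt_pos.mpr hprod
    have hs2 : s ^ 2 = x * (β - x) := Real.sq_sqrt hprod.le
    have hs' : s ≠ 0 := hspos.ne'
    have hu1 : (2 * x - β) / β ≠ 1 := by
      have : (2 * x - β) / β < 1 := (div_lt_one hβpos).mpr (by linarith)
      exact this.ne
    have hu1' : (2 * x - β) / β ≠ -1 := by
      have : (-1 : ℝ) < (2 * x - β) / β := (lt_div_iff₀ hβpos).mpr (by linarith)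
      exact this.ne'
    have d1 : HasDerivAt (fun y : ℝ => y * (β - y)) (β - 2 * x) x := by
      have := (hasDerivAt_id x).mul ((hasDerivAt_id x).const_sub β)
      refine this.congr_deriv ?_; simp; ring
    have d2 : HasDerivAt (fun y : ℝ => Real.sqrt (y * (β - y))) ((β - 2 * x) / (2 * s)) x := by
      have := (Real.hasDerivAt_sqrt hprod.ne').comp x d1
      refine this.congr_deriv ?_
      rw [← hs]; ring
    have d3 : HasDerivAt (fun y : ℝ => (2 * y - β) / β) (2 / β) x := by
      have := (((hasDerivAt_id x).const_mul 2).sub_const β).div_const β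
      refine this.congr_deriv ?_; simp
    have d4 : HasDerivAt (fun y : ℝ => Real.arcsin ((2 * y - β) / β)) (1 / s) x := by
      have := (Real.hasDerivAt_arcsin hu1' hu1).comp x d3
      refine this.congr_deriv ?_
      have hsq : Real.sqrt (1 - ((2 * x - β) / β) ^ 2) = 2 * s / β := by
        rw [show 1 - ((2 * x - β) / β) ^ 2 = (2 * s / β) ^ 2 by
          rw [div_pow, div_pow, mul_pow, hs2]; field_simp; ring]
        exact Real.sqrt_sq (by positivity)
      rw [hsq]
      field_simp
    have dA : HasDerivAt (fun y : ℝ => (y - β / 2) / 2 - δ₁) (1 / 2) x := by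
      have := (((hasDerivAt_id x).sub_const (β / 2)).div_const 2).sub_const δ₁
      exact this
    have d5 : HasDerivAt H
        (1 / 2 * s + ((x - β / 2) / 2 - δ₁) * ((β - 2 * x) / (2 * s)) + K * (1 / s)) x := by
      rw [hH]
      exact (dA.mul d2).add (d4.const_mul K)
    have d6 := d5.div_const c
    have hsqrt : Real.sqrt ((β - x) / x) = (β - x) / s := by
      rw [show (β - x) / x = ((β - x) / s) ^ 2 by
        rw [div_pow, hs2]; field_simp]
      exact Real.sqrt_sq (by positivity)
    have hpoly : s ^ 2 + ((x - β / 2) / 2 - δ₁) * (β - 2 * x) + 2 * K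
        = 2 * ((x - δ₁) * (β - x)) := by rw [hK, hs2]; ring
    have hstep : 1 / 2 * s + ((x - β / 2) / 2 - δ₁) * ((β - 2 * x) / (2 * s)) + K * (1 / s)
        = (x - δ₁) * ((β - x) / s) := by
      apply mul_right_cancel₀ (mul_ne_zero two_ne_zero hs' : (2:ℝ) * s ≠ 0)
      have e1 : (1 / 2 * s + ((x - β / 2) / 2 - δ₁) * ((β - 2 * x) / (2 * s)) + K * (1 / s))
            * (2 * s)
          = s ^ 2 + ((x - β / 2) / 2 - δ₁) * (β - 2 * x) + 2 * K := by
        field_simp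
      have e2 : (x - δ₁) * ((β - x) / s) * (2 * s) = 2 * ((x - δ₁) * (β - x)) := by
        field_simp
      rw [e1, e2, hpoly]
    have heq : (1 / 2 * s + ((x - β / 2) / 2 - δ₁) * ((β - 2 * x) / (2 * s)) + K * (1 / s)) / c
        = (x - δ₁) / c * Real.sqrt ((β - x) / x) := by
      rw [hsqrt, hstep]; ring
    rw [← heq]
    exact d6.hasDerivWithinAt
  -- FTC
  rw [intervalIntegral.integral_eq_sub_of_hasDeriv_right_of_le hβpos.le hcont hderiv hint]
  -- Evaluate the antiderivative at the endpoints
  have hHβ : H β = K * (π / 2) := by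
    rw [hH]
    simp only [sub_self, mul_zero, Real.sqrt_zero]
    rw [show 2 * β - β = β by ring, div_self hβne, Real.arcsin_one]
    ring
  have hH0 : H 0 = K * (-(π / 2)) := by
    rw [hH]
    simp only [zero_mul, Real.sqrt_zero, mul_zero]
    rw [zero_sub, neg_div, div_self hβne, Real.arcsin_neg, Real.arcsin_one]
    ring
  rw [hHβ, hH0]
  -- Final arithmetic
  have hsep2 : (β₁ - α₁) ^ 2 = 16 * (p₁ * t * (1 - t)) := by
    rw [hsep, mul_pow, Real.sq_sqrt (by positivity)]; norm_num
  have hkey : β ^ 2 - 4 * δ₁ * β = 16 * (p₁ * t * (1 - t)) := by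
    rw [hβ, hδ₁]
    linear_combination (4 / 3) * hr2 + hsep2
  rw [hK, hc]
  have hπ := Real.pi_ne_zero
  have h1 : t ≠ 0 := ht0.ne'
  have h2 : (1 - t) ≠ 0 := ht1'.ne'
  field_simp
  linear_combination 4 * hkey
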